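/- Fix a real number c > 0. Let p_{n,k} (0 ≤ k ≤ n) be the unique real numbers with x^n = Σ_{k=0}^n p_{n,k}·Π_k(x), extended by p_{n,k} = 0 for k > n, and let P_k(z) = Σ_{n≥0} p_{n,k} z^n ∈ ℝ[[z]] be the associated formal power series. Then for every k ≥ 0 one has the formal power series identity c^k·P_k(z) = (P_0(z) − 1)^k · P_0(z). -/

import Mathlib

open Polynomial

/-- The argument substitution `u = (x - (1+c)) / (2√c)` as a real polynomial. -/
noncomputable def shiftArg (c : ℝ) : Polynomial ℝ :=
  C (1 / (2 * Real.sqrt c)) * (X - C (1 + c))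

/-- The shifted Chebyshev polynomials of the second kind:
`Π_0 = 1`, `Π_n(x) = c^{n/2} U_n(u) + c^{(n-1)/2} U_{n-1}(u)` with
`u = (x-(1+c))/(2√c)`, for `n ≥ 1`. -/
noncomputable def PiP (c : ℝ) : ℕ → Polynomial ℝ
  | 0 => 1
  | n + 1 =>
      C (Real.sqrt c ^ (n + 1)) *
        (Polynomial.Chebyshev.U ℝ ((n : ℤ) + 1)).comp (shiftArg c) +
      C (Real.sqrt c ^ n) * (Polynomial.Chebyshev.U ℝ (n : ℤ)).comp (shiftArg c)

lemma hXs (c : ℝ) (hc : 0 < c) :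
    (X : Polynomial ℝ) - C (1 + c) = C (2 * Real.sqrt c) * shiftArg c := by
  have h : Real.sqrt c ≠ 0 := by positivity
  rw [shiftArg, ← mul_assoc, ← C_mul]
  rw [show (2 * Real.sqrt c) * (1 / (2 * Real.sqrt c)) = 1 by field_simp]
  simp

lemma two_shift (c : ℝ) (hc : 0 < c) :
    (2 : Polynomial ℝ) * shiftArg c = C (1 / Real.sqrt c) * (X - C (1 + c)) := by
  have h : Real.sqrt c ≠ 0 := by positivity
  rw [shiftArg, (map_ofNat C 2).symm, ← mul_assoc, ← C_mul]
  rw [show (2 : ℝ) * (1 / (2 * Real.sqrt c)) = 1 / Real.sqrt c by field_simp]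

lemma PiP_one (c : ℝ) (hc : 0 < c) : PiP c 1 = X - C c := by
  have h : Real.sqrt c ≠ 0 := by positivity
  have hd : PiP c 1 = C (Real.sqrt c ^ (0 + 1)) *
        (Polynomial.Chebyshev.U ℝ ((0 : ℤ) + 1)).comp (shiftArg c) +
      C (Real.sqrt c ^ 0) * (Polynomial.Chebyshev.U ℝ (0 : ℤ)).comp (shiftArg c) := rfl
  rw [hd]
  simp only [zero_add, Polynomial.Chebyshev.U_one, Polynomial.Chebyshev.U_zero, pow_one,
    pow_zero, map_one, one_mul, one_comp, mul_comp, X_comp, ofNat_comp, Nat.cast_ofNat]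
  rw [two_shift c hc, ← mul_assoc, ← C_mul]
  rw [show Real.sqrt c * (1 / Real.sqrt c) = 1 by field_simp]
  rw [C_1, one_mul, C_add, C_1]
  ring

lemma PiP_succ (c : ℝ) (n : ℕ) : PiP c (n+1) =
    C (Real.sqrt c ^ (n + 1)) *
        (Polynomial.Chebyshev.U ℝ ((n : ℤ) + 1)).comp (shiftArg c) +
      C (Real.sqrt c ^ n) * (Polynomial.Chebyshev.U ℝ (n : ℤ)).comp (shiftArg c) := rfl

lemma PiP_rec (c : ℝ) (hc : 0 < c) (k : ℕ) :
    PiP c (k+2) = (X - C (1+c)) * PiP c (k+1) - C c * PiP c k := by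
  have h : Real.sqrt c ≠ 0 := by positivity
  have hQ : ∀ n : ℤ, (Polynomial.Chebyshev.U ℝ (n+2)).comp (shiftArg c)
      = 2 * (shiftArg c) * (Polynomial.Chebyshev.U ℝ (n+1)).comp (shiftArg c)
        - (Polynomial.Chebyshev.U ℝ n).comp (shiftArg c) := by
    intro n
    rw [Polynomial.Chebyshev.U_add_two]
    simp only [sub_comp, mul_comp, ofNat_comp, X_comp, Nat.cast_ofNat]
  rw [hXs c hc, show (C c : Polynomial ℝ) = C (Real.sqrt c) * C (Real.sqrt c) by
    rw [← C_mul, Real.mul_self_sqrt hc.le]]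
  match k with
  | 0 =>
    rw [show PiP c 0 = 1 from rfl, PiP_succ c 1, PiP_succ c 0]
    simp only [Nat.cast_zero, Nat.cast_one, zero_add]
    rw [show ((1:ℤ)+1) = 0+2 by norm_num, hQ 0]
    simp only [Polynomial.Chebyshev.U_one, Polynomial.Chebyshev.U_zero, one_comp,
      mul_comp, ofNat_comp, X_comp, Nat.cast_ofNat, zero_add]
    simp only [map_pow, map_mul, map_ofNat]
    ring
  | m + 1 =>
    rw [PiP_succ c (m+2), PiP_succ c (m+1), PiP_succ c m]
    push_cast
    rw [show ((m:ℤ)+2+1) = ((m:ℤ)+1)+2 by ring, hQ ((m:ℤ)+1),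
      show ((m:ℤ)+1+1) = (m:ℤ)+2 by ring, hQ (m:ℤ)]
    simp only [map_pow, map_mul, map_ofNat]
    ring

lemma PiP_monic (c : ℝ) (hc : 0 < c) :
    ∀ k, (PiP c k).Monic ∧ (PiP c k).natDegree = k := by
  intro k
  induction k using Nat.strong_induction_on with
  | _ k ih =>
    match k with
    | 0 => exact ⟨monic_one, natDegree_one⟩
    | 1 => rw [PiP_one c hc]; exact ⟨monic_X_sub_C _, natDegree_X_sub_C _⟩
    | (k+2) =>
      obtain ⟨h1, d1⟩ := ih (k+1) (by omega)
      obtain ⟨h0, d0⟩ := ih k (by omega)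
      rw [PiP_rec c hc k]
      have hm : ((X - C (1+c)) * PiP c (k+1)).Monic := (monic_X_sub_C _).mul h1
      have hdeg : ((X - C (1+c)) * PiP c (k+1)).natDegree = k+2 := by
        rw [natDegree_mul (X_sub_C_ne_zero _) h1.ne_zero, natDegree_X_sub_C, d1]; omega
      have hlt : (C c * PiP c k).natDegree < ((X - C (1+c)) * PiP c (k+1)).natDegree := by
        rw [hdeg]
        calc (C c * PiP c k).natDegree ≤ (C c).natDegree + (PiP c k).natDegree :=
              natDegree_mul_le
          _ ≤ k := by rw [natDegree_C, d0]; omega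
          _ < k + 2 := by omega
      have hdlt : (C c * PiP c k).degree < ((X - C (1+c)) * PiP c (k+1)).degree :=
        degree_lt_degree hlt
      refine ⟨hm.sub_of_left hdlt, ?_⟩
      rw [natDegree_sub_eq_left_of_natDegree_lt hlt, hdeg]

lemma PiP_coeff_eq (c : ℝ) (hc : 0 < c) (k : ℕ) : (PiP c k).coeff k = 1 := by
  have h := (PiP_monic c hc k).1.coeff_natDegree
  rwa [(PiP_monic c hc k).2] at h

lemma PiP_coeff_lt (c : ℝ) (hc : 0 < c) {k m : ℕ} (h : k < m) : (PiP c k).coeff m = 0 :=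
  coeff_eq_zero_of_natDegree_lt (by rw [(PiP_monic c hc k).2]; exact h)

lemma indep (c : ℝ) (hc : 0 < c) :
    ∀ (N : ℕ) (a : ℕ → ℝ),
      (∑ k ∈ Finset.range N, C (a k) * PiP c k) = 0 → ∀ k < N, a k = 0 := by
  intro N
  induction N with
  | zero => intro a _ k hk; omega
  | succ N ih =>
    intro a h k hk
    have hN : a N = 0 := by
      have h2 := congrArg (fun q => Polynomial.coeff q N) h
      simp only [finset_sum_coeff, coeff_zero, coeff_C_mul] at h2
      rw [Finset.sum_range_succ, PiP_coeff_eq c hc N] at h2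
      rw [Finset.sum_eq_zero (fun i hi => by
        rw [PiP_coeff_lt c hc (Finset.mem_range.mp hi)]; ring)] at h2
      simpa using h2
    rw [Finset.sum_range_succ, hN] at h
    simp only [map_zero, zero_mul, add_zero] at h
    rcases Nat.lt_succ_iff_lt_or_eq.mp hk with h' | h'
    · exact ih a h k h'
    · rw [h']; exact hN

noncomputable def qfun (c : ℝ) (p : ℕ → ℕ → ℝ) (n : ℕ) : ℕ → ℝ
  | 0 => c * p n 0 + c * p n 1
  | (k+1) => p n k + (1+c) * p n (k+1) + c * p n (k+2)

section
variable (c : ℝ) (hc : 0 < c) (p : ℕ → ℕ → ℝ)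
  (hexp : ∀ n : ℕ, (X ^ n : Polynomial ℝ) = ∑ k ∈ Finset.range (n + 1), C (p n k) * PiP c k)
  (hzero : ∀ n k : ℕ, n < k → p n k = 0)

include hexp hzero in
lemma hexp' (n M : ℕ) (h : n + 1 ≤ M) :
    (X ^ n : Polynomial ℝ) = ∑ k ∈ Finset.range M, C (p n k) * PiP c k := by
  rw [hexp n]
  apply Finset.sum_subset (Finset.range_subset_range.mpr h)
  intro x hx hnx
  rw [hzero n x (by simp only [Finset.mem_range] at hx hnx ⊢; omega)]
  simp

include hexp in
lemma p00 : p 0 0 = 1 := by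
  have h := hexp 0
  rw [Finset.sum_range_one, show PiP c 0 = 1 from rfl, mul_one, pow_zero] at h
  have h2 := congrArg (fun q => Polynomial.coeff q 0) h
  simpa using h2.symm

include hc in
lemma XPi0 : (X : Polynomial ℝ) * PiP c 0 = PiP c 1 + C c * PiP c 0 := by
  rw [PiP_one c hc, show PiP c 0 = 1 from rfl]; ring

include hc in
lemma XPi (k : ℕ) : (X : Polynomial ℝ) * PiP c (k+1)
    = PiP c (k+2) + C (1+c) * PiP c (k+1) + C c * PiP c k := by
  rw [PiP_rec c hc k]; ring

include hc hexp hzero in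
lemma key (n : ℕ) :
    ∑ k ∈ Finset.range (n+3), C (qfun c p n k) * PiP c k = (X : Polynomial ℝ)^(n+1) := by
  have e1 : (X : Polynomial ℝ)^(n+1) = ∑ k ∈ Finset.range (n+2), C (p n k) * (X * PiP c k) := by
    rw [pow_succ, hexp' c p hexp hzero n (n+2) (by omega), Finset.sum_mul]
    exact Finset.sum_congr rfl fun k _ => by ring
  rw [e1]
  rw [Finset.sum_range_succ' (fun k => C (qfun c p n k) * PiP c k) (n+2)]
  rw [Finset.sum_range_succ' (fun k => C (p n k) * (X * PiP c k)) (n+1)]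
  have hL2 : ∑ k ∈ Finset.range (n+2), C (qfun c p n (k+1)) * PiP c (k+1)
      = ((∑ k ∈ Finset.range (n+2), C (p n k) * PiP c (k+1))
      + (∑ k ∈ Finset.range (n+2), C ((1+c) * p n (k+1)) * PiP c (k+1)))
      + (∑ k ∈ Finset.range (n+2), C (c * p n (k+2)) * PiP c (k+1)) := by
    rw [← Finset.sum_add_distrib, ← Finset.sum_add_distrib]
    refine Finset.sum_congr rfl fun k _ => ?_
    show C (p n k + (1+c) * p n (k+1) + c * p n (k+2)) * PiP c (k+1) = _
    simp only [map_add]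
    ring
  have hR2 : ∑ k ∈ Finset.range (n+1), C (p n (k+1)) * (X * PiP c (k+1))
      = ((∑ k ∈ Finset.range (n+1), C (p n (k+1)) * PiP c (k+2))
      + (∑ k ∈ Finset.range (n+1), C ((1+c) * p n (k+1)) * PiP c (k+1)))
      + (∑ k ∈ Finset.range (n+1), C (c * p n (k+1)) * PiP c k) := by
    rw [← Finset.sum_add_distrib, ← Finset.sum_add_distrib]
    refine Finset.sum_congr rfl fun k _ => ?_
    rw [XPi c hc k]
    simp only [C_mul]
    ring
  rw [hL2, hR2]
  have hA : ∑ k ∈ Finset.range (n+2), C (p n k) * PiP c (k+1)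
      = (∑ k ∈ Finset.range (n+1), C (p n (k+1)) * PiP c (k+2)) + C (p n 0) * PiP c 1 :=
    Finset.sum_range_succ' (fun k => C (p n k) * PiP c (k+1)) (n+1)
  have hB : ∑ k ∈ Finset.range (n+2), C ((1+c) * p n (k+1)) * PiP c (k+1)
      = ∑ k ∈ Finset.range (n+1), C ((1+c) * p n (k+1)) * PiP c (k+1) := by
    rw [Finset.sum_range_succ, hzero n (n+2) (by omega)]
    simp
  have hD : ∑ k ∈ Finset.range (n+2), C (c * p n (k+2)) * PiP c (k+1)
      = ∑ k ∈ Finset.range n, C (c * p n (k+2)) * PiP c (k+1) := by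
    rw [Finset.sum_range_succ, Finset.sum_range_succ,
      hzero n (n+3) (by omega), hzero n (n+2) (by omega)]
    simp
  have hD' : ∑ k ∈ Finset.range (n+1), C (c * p n (k+1)) * PiP c k
      = (∑ k ∈ Finset.range n, C (c * p n (k+2)) * PiP c (k+1)) + C (c * p n 1) * PiP c 0 :=
    Finset.sum_range_succ' (fun k => C (c * p n (k+1)) * PiP c k) n
  rw [hA, hB, hD, hD']
  rw [show qfun c p n 0 = c * p n 0 + c * p n 1 from rfl]
  rw [XPi0 c hc]
  simp only [map_add, map_mul]
  ring

include hc hexp hzero in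
lemma recs (n : ℕ) : ∀ k < n+3, p (n+1) k = qfun c p n k := by
  have hsum : ∑ k ∈ Finset.range (n+3), C (p (n+1) k - qfun c p n k) * PiP c k = 0 := by
    simp only [map_sub, sub_mul, Finset.sum_sub_distrib]
    rw [← hexp' c p hexp hzero (n+1) (n+3) (by omega), key c hc p hexp hzero n]
    exact sub_self _
  intro k hk
  have h := indep c hc (n+3) _ hsum k hk
  linarith

include hc hexp hzero in
lemma pRec0 (n : ℕ) : p (n+1) 0 = c * p n 0 + c * p n 1 :=
  recs c hc p hexp hzero n 0 (by omega)

include hc hexp hzero in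
lemma pRec1 (n k : ℕ) : p (n+1) (k+1) = p n k + (1+c) * p n (k+1) + c * p n (k+2) := by
  by_cases h : k + 1 < n + 3
  · exact recs c hc p hexp hzero n (k+1) h
  · have h1 : n + 2 ≤ k := by omega
    rw [hzero (n+1) (k+1) (by omega), hzero n k (by omega), hzero n (k+1) (by omega),
      hzero n (k+2) (by omega)]
    ring

end

section
variable (c : ℝ) (p : ℕ → ℕ → ℝ)
  (hp00 : p 0 0 = 1)
  (hzero : ∀ n k : ℕ, n < k → p n k = 0)
  (hR0 : ∀ n, p (n+1) 0 = c * p n 0 + c * p n 1)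
  (hR1 : ∀ n k, p (n+1) (k+1) = p n k + (1+c) * p n (k+1) + c * p n (k+2))

include hp00 hzero hR0 hR1 in
lemma Bkey : ∀ n k, c * p n (k+1) = ∑ i ∈ Finset.range n, p (i+1) 0 * p (n-1-i) k := by
  intro n
  induction n with
  | zero =>
    intro k
    rw [hzero 0 (k+1) (by omega)]
    simp
  | succ n IH =>
    intro k
    match k with
    | 0 =>
      have hinner : ∑ i ∈ Finset.range n, p (i+1) 0 * p (n-i) 0
          = c * (∑ i ∈ Finset.range n, p (i+1) 0 * p (n-1-i) 0)
          + c * (∑ i ∈ Finset.range n, p (i+1) 0 * p (n-1-i) 1) := by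
        rw [Finset.mul_sum, Finset.mul_sum, ← Finset.sum_add_distrib]
        refine Finset.sum_congr rfl fun i hi => ?_
        rw [show n - i = (n - 1 - i) + 1 by
          have := Finset.mem_range.mp hi; omega, hR0 (n-1-i)]
        ring
      rw [show (∑ i ∈ Finset.range (n+1), p (i+1) 0 * p (n+1-1-i) 0)
            = ∑ i ∈ Finset.range (n+1), p (i+1) 0 * p (n-i) 0 from
          Finset.sum_congr rfl fun i _ => by rw [show n+1-1-i = n-i by omega]]
      rw [Finset.sum_range_succ, Nat.sub_self, hinner, hp00, hR1 n 0, hR0 n]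
      linear_combination c * IH 0 + c * IH 1
    | (m+1) =>
      have hinner : ∑ i ∈ Finset.range n, p (i+1) 0 * p (n-i) (m+1)
          = (∑ i ∈ Finset.range n, p (i+1) 0 * p (n-1-i) m)
          + (1+c) * (∑ i ∈ Finset.range n, p (i+1) 0 * p (n-1-i) (m+1))
          + c * (∑ i ∈ Finset.range n, p (i+1) 0 * p (n-1-i) (m+2)) := by
        rw [Finset.mul_sum, Finset.mul_sum, ← Finset.sum_add_distrib, ← Finset.sum_add_distrib]
        refine Finset.sum_congr rfl fun i hi => ?_
        rw [show n - i = (n - 1 - i) + 1 by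
          have := Finset.mem_range.mp hi; omega, hR1 (n-1-i) m]
        ring
      rw [show (∑ i ∈ Finset.range (n+1), p (i+1) 0 * p (n+1-1-i) (m+1))
            = ∑ i ∈ Finset.range (n+1), p (i+1) 0 * p (n-i) (m+1) from
          Finset.sum_congr rfl fun i _ => by rw [show n+1-1-i = n-i by omega]]
      rw [Finset.sum_range_succ, Nat.sub_self, hinner, hzero 0 (m+1) (by omega), hR1 n (m+1)]
      linear_combination IH m + (1+c) * IH (m+1) + c * IH (m+2)

include hp00 hzero hR0 hR1 in
lemma cstep (k : ℕ) :
    (PowerSeries.C c) * PowerSeries.mk (fun n => p n (k+1))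
      = (PowerSeries.mk (fun n => p n 0) - 1) * PowerSeries.mk (fun n => p n k) := by
  ext n
  rw [PowerSeries.coeff_mul, PowerSeries.coeff_mul]
  rw [Finset.Nat.sum_antidiagonal_eq_sum_range_succ_mk,
    Finset.Nat.sum_antidiagonal_eq_sum_range_succ_mk]
  simp only [map_sub, PowerSeries.coeff_mk, PowerSeries.coeff_one, PowerSeries.coeff_C]
  rw [Finset.sum_range_succ' (fun i => ((if i = 0 then c else 0)) * p (n - i) (k+1)),
    Finset.sum_range_succ'
      (fun i => (p i 0 - if i = 0 then 1 else 0) * p (n - i) k)]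
  norm_num [hp00]
  rw [Bkey c p hp00 hzero hR0 hR1 n k]
  refine Finset.sum_congr rfl fun i hi => ?_
  rw [show n - 1 - i = n - (i+1) by omega]

end

theorem stmt6 (c : ℝ) (hc : 0 < c) (p : ℕ → ℕ → ℝ)
    (hexp : ∀ n : ℕ,
      (X ^ n : Polynomial ℝ) = ∑ k ∈ Finset.range (n + 1), C (p n k) * PiP c k)
    (hzero : ∀ n k : ℕ, n < k → p n k = 0) :
    ∀ k : ℕ,
      PowerSeries.C (c ^ k) * PowerSeries.mk (fun n => p n k) =
        (PowerSeries.mk (fun n => p n 0) - 1) ^ k * PowerSeries.mk (fun n => p n 0) := by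
  have hp00 := p00 c p hexp
  have hR0 := pRec0 c hc p hexp hzero
  have hR1 := pRec1 c hc p hexp hzero
  intro k
  induction k with
  | zero => simp
  | succ k ihk =>
    calc PowerSeries.C (c ^ (k+1)) * PowerSeries.mk (fun n => p n (k+1))
        = PowerSeries.C (c ^ k) *
            (PowerSeries.C c * PowerSeries.mk (fun n => p n (k+1))) := by
          rw [pow_succ, map_mul]; ring
      _ = PowerSeries.C (c ^ k) *
            ((PowerSeries.mk (fun n => p n 0) - 1) * PowerSeries.mk (fun n => p n k)) := by
          rw [cstep c p hp00 hzero hR0 hR1 k]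
      _ = (PowerSeries.mk (fun n => p n 0) - 1) *
            (PowerSeries.C (c ^ k) * PowerSeries.mk (fun n => p n k)) := by ring
      _ = (PowerSeries.mk (fun n => p n 0) - 1) *
            ((PowerSeries.mk (fun n => p n 0) - 1) ^ k * PowerSeries.mk (fun n => p n 0)) := by
          rw [ihk]
      _ = _ := by ring
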